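/- Let d be a positive integer, L a real symmetric positive semidefinite d×d matrix whose null space is exactly the span of the all-ones vector 𝟙, and P a real d×d matrix satisfying the Penrose conditions L·P·L = L, P·L·P = P, (L·P)ᵀ = L·P, (P·L)ᵀ = P·L. Let λ₂ > 0 be the smallest eigenvalue of L restricted to the orthogonal complement of 𝟙 (i.e., λ₂ = min{wᵀLw : ‖w‖₂ = 1, 𝟙ᵀw = 0}). Let ℓ : ℝ^d → ℝ be differentiable, let β > 0, and let û, u* ∈ ℝ^d with Δ = û − u* satisfying: (i) ℓ(û) ≤ ℓ(u*); (ii) β·ΔᵀLΔ ≤ ℓ(û) − ℓ(u*) − ∇ℓ(u*)ᵀΔ; and (iii) 𝟙ᵀΔ = 0. Then ΔᵀLΔ ≤ (1/β²)·∇ℓ(u*)ᵀ P ∇ℓ(u*), and consequently ‖Δ‖₂² ≤ (1/(λ₂ β²))·∇ℓ(u*)ᵀ P ∇ℓ(u*). -/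

import Mathlib

open Matrix

/-- Cauchy–Schwarz inequality for the bilinear form of a positive semidefinite matrix. -/
lemma psd_cauchy_schwarz' {d : ℕ} {L : Matrix (Fin d) (Fin d) ℝ} (hL : L.PosSemidef)
    (x y : Fin d → ℝ) :
    (x ⬝ᵥ L.mulVec y) ^ 2 ≤ (x ⬝ᵥ L.mulVec x) * (y ⬝ᵥ L.mulVec y) := by
  have hLt : Lᵀ = L := by exact (show L.IsSymm by simpa using hL.1).eq
  have hsym : ∀ a b : Fin d → ℝ, a ⬝ᵥ L.mulVec b = b ⬝ᵥ L.mulVec a := by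
    intro a b
    rw [dotProduct_mulVec, ← mulVec_transpose, hLt, dotProduct_comm]
  have key : ∀ t : ℝ, 0 ≤ (y ⬝ᵥ L.mulVec y) * (t * t) + (2 * (x ⬝ᵥ L.mulVec y)) * t
      + (x ⬝ᵥ L.mulVec x) := by
    intro t
    have h := hL.dotProduct_mulVec_nonneg (x + t • y)
    simp only [star_trivial, mulVec_add, mulVec_smul, dotProduct_add, dotProduct_smul,
      add_dotProduct, smul_dotProduct, smul_eq_mul] at h
    rw [hsym y x] at h
    nlinarith [h]
  have hd := discrim_le_zero key
  rw [discrim] at hd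
  nlinarith [hd]

/-- The Moore–Penrose pseudoinverse of a symmetric matrix is symmetric and commutes with it. -/
lemma pinv_symm' {d : ℕ} (L P : Matrix (Fin d) (Fin d) ℝ) (hLt : Lᵀ = L)
    (hP1 : L * P * L = L) (hP2 : P * L * P = P)
    (hP3 : (L * P)ᵀ = L * P) (hP4 : (P * L)ᵀ = P * L) :
    Pᵀ = P ∧ L * P = P * L := by
  have hLP : L * Pᵀ = P * L := by
    calc L * Pᵀ = (P * Lᵀ)ᵀ := by rw [transpose_mul, transpose_transpose]
      _ = (P * L)ᵀ := by rw [hLt]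
      _ = P * L := hP4
  have hPL : Pᵀ * L = L * P := by
    calc Pᵀ * L = (Lᵀ * P)ᵀ := by rw [transpose_mul, transpose_transpose]
      _ = (L * P)ᵀ := by rw [hLt]
      _ = L * P := hP3
  have hB1 : L * Pᵀ * L = L := by
    have h := congrArg transpose hP1
    rw [transpose_mul, transpose_mul, hLt, ← Matrix.mul_assoc] at h
    exact h
  have hB2 : Pᵀ * L * Pᵀ = Pᵀ := by
    have h := congrArg transpose hP2
    rw [transpose_mul, transpose_mul, hLt, ← Matrix.mul_assoc] at h
    exact h
  have e1 : (L * P) * (P * L) = P * L := by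
    rw [← hLP, ← Matrix.mul_assoc, hP1]
  have e2 : (P * L) * (L * P) = L * P := by
    calc (P * L) * (L * P) = (L * Pᵀ) * (L * P) := by rw [hLP]
      _ = (L * Pᵀ * L) * P := by rw [Matrix.mul_assoc (L * Pᵀ)]
      _ = L * P := by rw [hB1]
  have hcomm : L * P = P * L := by
    calc L * P = (P * L) * (L * P) := e2.symm
      _ = ((L * P)ᵀ * (P * L)ᵀ)ᵀ := by rw [← transpose_mul, transpose_transpose]
      _ = ((L * P) * (P * L))ᵀ := by rw [hP3, hP4]
      _ = (P * L)ᵀ := by rw [e1]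
      _ = P * L := hP4
  refine ⟨?_, hcomm⟩
  calc Pᵀ = (L * P) * Pᵀ := by rw [← hPL, hB2]
    _ = (P * L) * Pᵀ := by rw [hcomm]
    _ = P * (L * Pᵀ) := by rw [Matrix.mul_assoc]
    _ = P * (P * L) := by rw [hLP]
    _ = P * (L * P) := by rw [hcomm]
    _ = P := by rw [← Matrix.mul_assoc, hP2]

/-- `P*L` acts as the identity on vectors orthogonal to the all-ones vector. -/
lemma projPL_fixes' {d : ℕ} (hd : 0 < d)
    (L P : Matrix (Fin d) (Fin d) ℝ)
    (hnull : ∀ w : Fin d → ℝ, L.mulVec w = 0 ↔ ∃ c : ℝ, ∀ i, w i = c)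
    (hP1 : L * P * L = L) (hP4 : (P * L)ᵀ = P * L)
    (Δ : Fin d → ℝ) (h3 : ∑ i, Δ i = 0) :
    (P * L).mulVec Δ = Δ := by
  have hone : L.mulVec (fun _ => (1:ℝ)) = 0 := (hnull _).mpr ⟨1, fun _ => rfl⟩
  set r := Δ - (P * L).mulVec Δ with hr
  have hr0 : L.mulVec r = 0 := by
    rw [hr, Matrix.mulVec_sub, Matrix.mulVec_mulVec, ← Matrix.mul_assoc, hP1, sub_self]
  obtain ⟨c, hc⟩ := (hnull r).mp hr0
  have hsum : ∑ i, ((P * L).mulVec Δ) i = 0 := by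
    have : ∑ i, ((P * L).mulVec Δ) i = (fun _ => (1:ℝ)) ⬝ᵥ (P * L).mulVec Δ := by
      simp [dotProduct]
    rw [this, dotProduct_mulVec, ← Matrix.mulVec_transpose, hP4, ← Matrix.mulVec_mulVec,
      hone, Matrix.mulVec_zero, zero_dotProduct]
  have hrsum : ∑ i, r i = 0 := by
    simp [hr, Finset.sum_sub_distrib, h3, hsum]
  have hc0 : c = 0 := by
    have : ∑ i, r i = (d : ℝ) * c := by simp [hc, mul_comm]
    rw [hrsum] at this
    have : (d:ℝ) ≠ 0 := by positivity
    field_simp at *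
    rcases mul_eq_zero.mp this.symm with h | h
    · exact h
    · exact absurd h ‹(d:ℝ) ≠ 0›
  have hrz : Δ - (P * L).mulVec Δ = 0 := by
    rw [← hr]; exact funext fun i => by rw [hc i, hc0]; rfl
  exact (sub_eq_zero.mp hrz).symm

/-- **Deterministic core of the proof of Theorem 3.**  Let `L` be a symmetric positive
semidefinite `d × d` matrix whose null space is exactly the span of the all-ones vector,
`P` its Moore–Penrose pseudoinverse (characterized by the Penrose conditions), and
`lam > 0` the minimum of the quadratic form `w ↦ wᵀLw` over unit vectors `w ⊥ 𝟙`.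
Let `ℓ` be differentiable at `ustar` with gradient `g`, let `β > 0`, and suppose
`Δ = uhat - ustar` satisfies (i) `ℓ(uhat) ≤ ℓ(ustar)`,
(ii) `β·ΔᵀLΔ ≤ ℓ(uhat) - ℓ(ustar) - gᵀΔ` (strong convexity in the `L` seminorm), and
(iii) `𝟙ᵀΔ = 0`.  Then `ΔᵀLΔ ≤ (1/β²)·gᵀPg` and `‖Δ‖₂² ≤ (1/(lam·β²))·gᵀPg`. -/
theorem mle_seminorm_error_bound (d : ℕ) (hd : 0 < d)
    (L P : Matrix (Fin d) (Fin d) ℝ)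
    (hL : L.PosSemidef)
    (hnull : ∀ w : Fin d → ℝ, L.mulVec w = 0 ↔ ∃ c : ℝ, ∀ i, w i = c)
    (hP1 : L * P * L = L) (hP2 : P * L * P = P)
    (hP3 : (L * P)ᵀ = L * P) (hP4 : (P * L)ᵀ = P * L)
    (lam : ℝ) (hlam_pos : 0 < lam)
    (hlam : IsLeast
      {r : ℝ | ∃ w : Fin d → ℝ, (∑ i, w i ^ 2) = 1 ∧ (∑ i, w i) = 0 ∧
        r = w ⬝ᵥ L.mulVec w} lam)
    (ℓ : (Fin d → ℝ) → ℝ) (β : ℝ) (hβ : 0 < β)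
    (uhat ustar g : Fin d → ℝ)
    (hdiff : DifferentiableAt ℝ ℓ ustar)
    (hg : ∀ v : Fin d → ℝ, fderiv ℝ ℓ ustar v = g ⬝ᵥ v)
    (h1 : ℓ uhat ≤ ℓ ustar)
    (h2 : β * ((uhat - ustar) ⬝ᵥ L.mulVec (uhat - ustar)) ≤
      ℓ uhat - ℓ ustar - g ⬝ᵥ (uhat - ustar))
    (h3 : ∑ i, (uhat i - ustar i) = 0) :
    (uhat - ustar) ⬝ᵥ L.mulVec (uhat - ustar) ≤ (1 / β ^ 2) * (g ⬝ᵥ P.mulVec g) ∧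
    (∑ i, (uhat i - ustar i) ^ 2) ≤ (1 / (lam * β ^ 2)) * (g ⬝ᵥ P.mulVec g) := by
  have hLt : Lᵀ = L := by exact (show L.IsSymm by simpa using hL.1).eq
  obtain ⟨hPsym, hcomm⟩ := pinv_symm' L P hLt hP1 hP2 hP3 hP4
  set Δ : Fin d → ℝ := uhat - ustar with hΔdef
  have h3' : ∑ i, Δ i = 0 := by simpa [hΔdef] using h3
  have hfix : (P * L).mulVec Δ = Δ := projPL_fixes' hd L P hnull hP1 hP4 Δ h3'
  -- gᵀΔ = (Pg)ᵀ L Δ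
  have hkey : g ⬝ᵥ Δ = (P.mulVec g) ⬝ᵥ L.mulVec Δ := by
    calc g ⬝ᵥ Δ = g ⬝ᵥ (P * L).mulVec Δ := by rw [hfix]
      _ = g ⬝ᵥ P.mulVec (L.mulVec Δ) := by rw [← Matrix.mulVec_mulVec]
      _ = (Pᵀ.mulVec g) ⬝ᵥ L.mulVec Δ := by
          rw [dotProduct_mulVec, Matrix.mulVec_transpose]
      _ = (P.mulVec g) ⬝ᵥ L.mulVec Δ := by rw [hPsym]
  -- (Pg)ᵀ L (Pg) = gᵀ P g
  have hPg : (P.mulVec g) ⬝ᵥ L.mulVec (P.mulVec g) = g ⬝ᵥ P.mulVec g := by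
    calc (P.mulVec g) ⬝ᵥ L.mulVec (P.mulVec g)
        = (P.mulVec g) ⬝ᵥ (L * P).mulVec g := by rw [← Matrix.mulVec_mulVec]
      _ = ((L * P)ᵀ.mulVec (P.mulVec g)) ⬝ᵥ g := by
          rw [dotProduct_mulVec, Matrix.mulVec_transpose]
      _ = ((L * P).mulVec (P.mulVec g)) ⬝ᵥ g := by rw [hP3]
      _ = (((L * P) * P).mulVec g) ⬝ᵥ g := by
          simp only [← Matrix.mulVec_mulVec]
      _ = (((P * L) * P).mulVec g) ⬝ᵥ g := by rw [hcomm]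
      _ = (P.mulVec g) ⬝ᵥ g := by rw [hP2]
      _ = g ⬝ᵥ P.mulVec g := dotProduct_comm _ _
  set t : ℝ := Δ ⬝ᵥ L.mulVec Δ with ht
  set G : ℝ := g ⬝ᵥ P.mulVec g with hG
  have ht0 : 0 ≤ t := by simpa [ht] using hL.dotProduct_mulVec_nonneg Δ
  have hG0 : 0 ≤ G := by
    rw [← hPg]; simpa using hL.dotProduct_mulVec_nonneg (P.mulVec g)
  have hβt : β * t ≤ -(g ⬝ᵥ Δ) := by linarith [h2, h1]
  have hCS : (g ⬝ᵥ Δ) ^ 2 ≤ G * t := by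
    rw [hkey]
    calc ((P.mulVec g) ⬝ᵥ L.mulVec Δ) ^ 2
        ≤ ((P.mulVec g) ⬝ᵥ L.mulVec (P.mulVec g)) * (Δ ⬝ᵥ L.mulVec Δ) :=
          psd_cauchy_schwarz' hL _ _
      _ = G * t := by rw [hPg, ← ht]
  have h4 : (β * t) ^ 2 ≤ (g ⬝ᵥ Δ) ^ 2 := by
    have h5 := pow_le_pow_left₀ (mul_nonneg hβ.le ht0) hβt 2
    calc (β * t) ^ 2 ≤ (-(g ⬝ᵥ Δ)) ^ 2 := h5
      _ = (g ⬝ᵥ Δ) ^ 2 := by ring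
  have hsq : β ^ 2 * t ^ 2 ≤ G * t := by
    calc β ^ 2 * t ^ 2 = (β * t) ^ 2 := by ring
      _ ≤ (g ⬝ᵥ Δ) ^ 2 := h4
      _ ≤ G * t := hCS
  have goal1 : t ≤ 1 / β ^ 2 * G := by
    rcases ht0.eq_or_lt with h | h
    · rw [← h]; positivity
    · rw [div_mul_eq_mul_div, le_div_iff₀ (by positivity)]
      have : β ^ 2 * t * t ≤ G * t := by nlinarith [hsq]
      have := (mul_le_mul_iff_of_pos_right h).mp this
      linarith
  refine ⟨goal1, ?_⟩
  -- second claim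
  set s : ℝ := ∑ i, Δ i ^ 2 with hs
  have hgoal2 : (∑ i, (uhat i - ustar i) ^ 2) = s := by
    simp [hs, hΔdef]
  rw [hgoal2]
  have hs0 : 0 ≤ s := by positivity
  rcases hs0.eq_or_lt with h | h
  · rw [← h]
    have : (0:ℝ) ≤ 1 / (lam * β ^ 2) * G := by positivity
    linarith
  · -- normalize Δ to a unit vector
    set w : Fin d → ℝ := (Real.sqrt s)⁻¹ • Δ with hw
    have hss : Real.sqrt s ^ 2 = s := Real.sq_sqrt hs0
    have hspos : 0 < Real.sqrt s := Real.sqrt_pos.mpr h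
    have hw1 : ∑ i, w i ^ 2 = 1 := by
      simp only [hw, Pi.smul_apply, smul_eq_mul, mul_pow, ← Finset.mul_sum]
      rw [← hs]
      field_simp
      exact hss.symm
    have hw2 : ∑ i, w i = 0 := by
      simp only [hw, Pi.smul_apply, smul_eq_mul, ← Finset.mul_sum]
      rw [h3', mul_zero]
    have hwq : w ⬝ᵥ L.mulVec w = s⁻¹ * t := by
      simp only [hw, Matrix.mulVec_smul, smul_dotProduct, dotProduct_smul, smul_eq_mul, ← ht]
      rw [← mul_assoc, ← mul_inv, Real.mul_self_sqrt hs0]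
    have hmem : s⁻¹ * t ∈ {r : ℝ | ∃ w : Fin d → ℝ, (∑ i, w i ^ 2) = 1 ∧ (∑ i, w i) = 0 ∧
        r = w ⬝ᵥ L.mulVec w} := ⟨w, hw1, hw2, hwq.symm⟩
    have hlb := hlam.2 hmem
    have hst : lam * s ≤ t := by
      have := (mul_le_mul_iff_of_pos_right h).mpr hlb
      rw [mul_comm s⁻¹ t, mul_assoc, inv_mul_cancel₀ (ne_of_gt h), mul_one] at this
      linarith [this]
    have : lam * s ≤ 1 / β ^ 2 * G := le_trans hst goal1
    rw [div_mul_eq_mul_div, le_div_iff₀ (by positivity), one_mul]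
    calc s * (lam * β ^ 2) = (lam * s) * β ^ 2 := by ring
      _ ≤ (1 / β ^ 2 * G) * β ^ 2 := by nlinarith [this]
      _ = G := by field_simp
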